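/- If f̂ and f̃ are dc functions on a convex set D ⊆ ℝⁿ, then their product f̂·f̃ is dc on D. -/

import Mathlib

open Set

section Aux

variable {E : Type*} [NormedAddCommGroup E] [NormedSpace ℝ E]

/-- Affine functions are convex on any convex set. -/
lemma affine_convexOn {D : Set E} (hD : Convex ℝ D) (ψ : E →L[ℝ] ℝ) (c : ℝ) :
    ConvexOn ℝ D (fun x => ψ x + c) := by
  refine ⟨hD, fun x hx y hy a b ha hb hab => ?_⟩
  simp only [map_add, map_smul, smul_eq_mul]
  have hc : a * c + b * c = c := by rw [← add_mul, hab, one_mul]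
  linarith [hc]

/-- Transfer convexity along a pointwise equality. -/
lemma convexOn_congr {D : Set E} {f f' : E → ℝ} (h : ConvexOn ℝ D f) (he : ∀ x, f x = f' x) :
    ConvexOn ℝ D f' := by
  have : f = f' := funext he
  rwa [this] at h

/-- The square of a nonnegative convex function is convex. -/
lemma sq_convexOn {D : Set E} {f : E → ℝ} (hf : ConvexOn ℝ D f) (h0 : ∀ x ∈ D, 0 ≤ f x) :
    ConvexOn ℝ D (fun x => f x * f x) := by
  refine ⟨hf.1, fun x hx y hy a b ha hb hab => ?_⟩
  simp only [smul_eq_mul]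
  have hmem : a • x + b • y ∈ D := hf.1 hx hy ha hb hab
  have huf : f (a • x + b • y) ≤ a * f x + b * f y := by
    have := hf.2 hx hy ha hb hab
    simpa [smul_eq_mul] using this
  have hu0 : 0 ≤ f (a • x + b • y) := h0 _ hmem
  have hrhs : 0 ≤ a * f x + b * f y :=
    add_nonneg (mul_nonneg ha (h0 x hx)) (mul_nonneg hb (h0 y hy))
  have h1 : f (a • x + b • y) * f (a • x + b • y) ≤ (a * f x + b * f y) * (a * f x + b * f y) :=
    mul_le_mul huf huf hu0 hrhs
  nlinarith [mul_nonneg (mul_nonneg ha hb) (sq_nonneg (f x - f y)), sq_nonneg (f x - f y)]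


open Set

variable {E : Type*} [NormedAddCommGroup E] [NormedSpace ℝ E]

/-- Existence of affine minorant when the interior is nonempty. -/
lemma exists_affine_minorant_of_interior [FiniteDimensional ℝ E] {D : Set E} {g : E → ℝ} {x₀ : E}
    (hg : ConvexOn ℝ D g) (hx₀ : x₀ ∈ interior D) :
    ∃ (ψ : E →L[ℝ] ℝ) (c : ℝ), ∀ x ∈ D, ψ x + c ≤ g x := by
  set U : Set (E × ℝ) := {p | p.1 ∈ interior D ∧ g p.1 < p.2} with hU
  have hgi : ConvexOn ℝ (interior D) g := hg.subset interior_subset hg.1.interior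
  have hUopen : IsOpen U := by
    have hcont : ContinuousOn (fun p : E × ℝ => p.2 - g p.1) (interior D ×ˢ (univ : Set ℝ)) := by
      refine ContinuousOn.sub continuousOn_snd ?_
      exact (hgi.continuousOn isOpen_interior).comp continuousOn_fst (fun p hp => hp.1)
    have : U = (interior D ×ˢ (univ : Set ℝ)) ∩ ((fun p : E × ℝ => p.2 - g p.1) ⁻¹' Ioi 0) := by
      ext p; simp [hU, sub_pos]
    rw [this]
    exact hcont.isOpen_inter_preimage (isOpen_interior.prod isOpen_univ) isOpen_Ioi
  have hUconv : Convex ℝ U := by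
    rintro ⟨x, s⟩ ⟨hx, hxs⟩ ⟨y, t⟩ ⟨hy, hyt⟩ a b ha hb hab
    refine ⟨hg.1.interior hx hy ha hb hab, ?_⟩
    have h1 : g (a • x + b • y) ≤ a * g x + b * g y := hgi.2 hx hy ha hb hab
    have : a * g x + b * g y < a * s + b * t := by
      rcases eq_or_lt_of_le ha with rfl | ha'
      · simp only [zero_add] at hab; subst hab; simpa using hyt
      · rcases eq_or_lt_of_le hb with rfl | hb'
        · simp only [add_zero] at hab; subst hab; simpa using hxs
        · nlinarith
    simpa using h1.trans_lt this
  have hp₀ : (x₀, g x₀) ∉ U := fun h => lt_irrefl _ h.2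
  obtain ⟨f, hf⟩ := geometric_hahn_banach_open_point hUconv hUopen hp₀
  set β : ℝ := f (0, 1) with hβ
  set φ : E →L[ℝ] ℝ := f.comp (ContinuousLinearMap.inl ℝ E ℝ) with hφ
  have hsplit : ∀ (x : E) (t : ℝ), f (x, t) = φ x + t * β := by
    intro x t
    have : (x, t) = (x, (0:ℝ)) + t • ((0:E), (1:ℝ)) := by simp [Prod.ext_iff]
    rw [this, map_add, map_smul]
    simp [hφ, hβ, ContinuousLinearMap.inl, smul_eq_mul]
  have hβneg : β < 0 := by
    have h1 := hf (x₀, g x₀ + 1) ⟨hx₀, by show g x₀ < g x₀ + 1; linarith⟩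
    rw [hsplit, hsplit] at h1
    linarith
  have hβ' : (0:ℝ) < -β := by linarith
  -- minorant on the interior, multiplication form
  have hint : ∀ x ∈ interior D, φ x - φ x₀ ≤ (g x - g x₀) * (-β) := by
    intro x hx
    have key : φ x + g x * β ≤ φ x₀ + g x₀ * β := by
      by_contra hcon
      push_neg at hcon
      set num : ℝ := φ x + g x * β - (φ x₀ + g x₀ * β) with hnum
      have hnum' : 0 < num := by linarith
      set δ : ℝ := num / (-β) / 2 with hδ
      have hδpos : 0 < δ := by
        apply div_pos (div_pos hnum' hβ') (by norm_num)
      have h2 := hf (x, g x + δ) ⟨hx, by show g x < g x + δ; linarith⟩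
      rw [hsplit, hsplit] at h2
      have hδβ : δ * β = -(num / 2) := by
        have hb0 : (-β*2 : ℝ) ≠ 0 := by nlinarith
        rw [hδ, div_div, div_mul_eq_mul_div, div_eq_iff hb0]
        ring
      nlinarith
    nlinarith
  -- extend to all of D
  have hall : ∀ x ∈ D, φ x - φ x₀ ≤ (g x - g x₀) * (-β) := by
    intro x hx
    have hmem : x + (1/2 : ℝ) • (x₀ - x) ∈ interior D :=
      hg.1.add_smul_sub_mem_interior hx hx₀ ⟨by norm_num, by norm_num⟩
    have h1 := hint _ hmem
    have h2 : g (x + (1/2 : ℝ) • (x₀ - x)) ≤ (1/2) * g x + (1/2) * g x₀ := by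
      have heq : x + (1/2 : ℝ) • (x₀ - x) = (1/2 : ℝ) • x + (1/2 : ℝ) • x₀ := by
        module
      rw [heq]
      exact hg.2 hx (interior_subset hx₀) (by norm_num) (by norm_num) (by norm_num)
    have h3 : φ (x + (1/2 : ℝ) • (x₀ - x)) = φ x + (1/2) * (φ x₀ - φ x) := by
      rw [map_add, map_smul, map_sub]
      simp [smul_eq_mul]
    rw [h3] at h1
    nlinarith
  refine ⟨(-β)⁻¹ • φ, g x₀ - (-β)⁻¹ * φ x₀, fun x hx => ?_⟩
  have h := hall x hx
  have h2 : (-β)⁻¹ * (φ x - φ x₀) ≤ g x - g x₀ := by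
    rw [← div_eq_inv_mul, div_le_iff₀ hβ']
    linarith
  simp only [ContinuousLinearMap.smul_apply, smul_eq_mul]
  rw [mul_sub] at h2
  linarith
lemma exists_affine_minorant [FiniteDimensional ℝ E] {D : Set E} {g : E → ℝ}
    (hD : Convex ℝ D) (hne : D.Nonempty) (hg : ConvexOn ℝ D g) :
    ∃ (ψ : E →L[ℝ] ℝ) (c : ℝ), ∀ x ∈ D, ψ x + c ≤ g x := by
  obtain ⟨x₀, hx₀⟩ := hne
  set V : Submodule ℝ E := vectorSpan ℝ D with hV
  obtain ⟨W, hVW⟩ := V.exists_isCompl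
  set P : E →ₗ[ℝ] E := V.subtype.comp (V.projectionOnto W hVW) with hP
  have hPV : ∀ v ∈ V, P v = v := by
    intro v hv
    have : V.projectionOnto W hVW v = ⟨v, hv⟩ := by
      have := Submodule.projectionOnto_apply_left hVW ⟨v, hv⟩
      simpa using this
    simp [hP, this]
  have hPW : ∀ w ∈ W, P w = 0 := by
    intro w hw
    have := Submodule.projectionOnto_apply_right hVW ⟨w, hw⟩
    simp [hP]
    simpa using congrArg (Submodule.subtype V) this
  set σ : E →ᵃ[ℝ] E := AffineMap.mk' (fun y => x₀ + P (y - x₀)) P x₀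
    (by intro y; simp [map_sub]; abel) with hσ
  have hσ_apply : ∀ y, σ y = x₀ + P (y - x₀) := fun y => rfl
  set Dh : Set E := σ ⁻¹' D with hDh
  have hDhconv : Convex ℝ Dh := hD.affine_preimage σ
  have hsub : D ⊆ Dh := by
    intro d hd
    have hdV : d - x₀ ∈ V := by
      have := vsub_mem_vectorSpan ℝ hd hx₀
      simpa [hV] using this
    simp only [hDh, mem_preimage, hσ_apply, hPV _ hdV]
    simpa using hd
  have hx₀Dh : x₀ ∈ Dh := hsub hx₀
  have hghat : ConvexOn ℝ Dh (g ∘ σ) := hg.comp_affineMap σ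
  have hspan : affineSpan ℝ Dh = ⊤ := by
    rw [AffineSubspace.affineSpan_eq_top_iff_vectorSpan_eq_top_of_nonempty ℝ E E ⟨x₀, hx₀Dh⟩]
    rw [eq_top_iff, ← hVW.sup_eq_top]
    refine sup_le ?_ ?_
    · exact (vectorSpan_mono ℝ hsub)
    · intro w hw
      have hmem : x₀ + w ∈ Dh := by
        simp only [hDh, mem_preimage, hσ_apply]
        have : x₀ + w - x₀ = w := by abel
        rw [this, hPW _ hw]
        simpa using hx₀
      have := vsub_mem_vectorSpan ℝ hmem hx₀Dh
      simpa using this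
  obtain ⟨y₀, hy₀⟩ : (interior Dh).Nonempty := by
    rw [hDhconv.interior_nonempty_iff_affineSpan_eq_top]
    exact hspan
  obtain ⟨ψ, c, hψ⟩ := exists_affine_minorant_of_interior hghat hy₀
  exact ⟨ψ, c, fun x hx => by
    have h1 := hψ x (hsub hx)
    have h2 : σ x = x := by
      have hdV : x - x₀ ∈ V := by
        have := vsub_mem_vectorSpan ℝ hx hx₀
        simpa [hV] using this
      simp [hσ_apply, hPV _ hdV]
    simpa [h2] using h1⟩

/-- Any dc function on a nonempty convex set is a difference of nonnegative convex functions. -/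
lemma exists_nonneg_decomposition [FiniteDimensional ℝ E] {D : Set E} {f g h : E → ℝ}
    (hD : Convex ℝ D) (hne : D.Nonempty) (hg : ConvexOn ℝ D g) (hh : ConvexOn ℝ D h)
    (hf : ∀ x ∈ D, f x = g x - h x) :
    ∃ P Q : E → ℝ, ConvexOn ℝ D P ∧ ConvexOn ℝ D Q ∧ (∀ x ∈ D, 0 ≤ P x) ∧
      (∀ x ∈ D, 0 ≤ Q x) ∧ ∀ x ∈ D, f x = P x - Q x := by
  obtain ⟨ψg, cg, hψg⟩ := exists_affine_minorant hD hne hg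
  obtain ⟨ψh, ch, hψh⟩ := exists_affine_minorant hD hne hh
  refine ⟨fun x => (g x + ((-ψg) x + (-cg))) + max ((ψg - ψh) x + (cg - ch)) 0,
          fun x => (h x + ((-ψh) x + (-ch))) + max ((ψh - ψg) x + (ch - cg)) 0,
          ?_, ?_, ?_, ?_, ?_⟩
  · exact (hg.add (affine_convexOn hD (-ψg) (-cg))).add
      ((affine_convexOn hD (ψg - ψh) (cg - ch)).sup (convexOn_const 0 hD))
  · exact (hh.add (affine_convexOn hD (-ψh) (-ch))).add
      ((affine_convexOn hD (ψh - ψg) (ch - cg)).sup (convexOn_const 0 hD))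
  · intro x hx
    have := hψg x hx
    have h2 : (0:ℝ) ≤ max ((ψg - ψh) x + (cg - ch)) 0 := le_max_right _ _
    simp only [ContinuousLinearMap.neg_apply]
    linarith
  · intro x hx
    have := hψh x hx
    have h2 : (0:ℝ) ≤ max ((ψh - ψg) x + (ch - cg)) 0 := le_max_right _ _
    simp only [ContinuousLinearMap.neg_apply]
    linarith
  · intro x hx
    have hfx := hf x hx
    simp only [ContinuousLinearMap.neg_apply, ContinuousLinearMap.sub_apply]
    rcases le_total (ψg x + cg) (ψh x + ch) with hle | hle
    · rw [max_eq_right (by linarith), max_eq_left (by linarith)]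
      linarith
    · rw [max_eq_left (by linarith), max_eq_right (by linarith)]
      linarith

end Aux

theorem product_of_dc_is_dc (n : ℕ) (D : Set (Fin n → ℝ)) (hD : Convex ℝ D)
    (f₁ f₂ : (Fin n → ℝ) → ℝ)
    (hf₁ : ∃ g h : (Fin n → ℝ) → ℝ, ConvexOn ℝ D g ∧ ConvexOn ℝ D h ∧
      ∀ x ∈ D, f₁ x = g x - h x)
    (hf₂ : ∃ g h : (Fin n → ℝ) → ℝ, ConvexOn ℝ D g ∧ ConvexOn ℝ D h ∧
      ∀ x ∈ D, f₂ x = g x - h x) :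
    ∃ g h : (Fin n → ℝ) → ℝ, ConvexOn ℝ D g ∧ ConvexOn ℝ D h ∧
      ∀ x ∈ D, f₁ x * f₂ x = g x - h x := by
  rcases D.eq_empty_or_nonempty with rfl | hne
  · exact ⟨0, 0, convexOn_const 0 convex_empty, convexOn_const 0 convex_empty,
      fun x hx => absurd hx (Set.notMem_empty x)⟩
  obtain ⟨g₁, h₁, hg₁, hh₁, he₁⟩ := hf₁
  obtain ⟨g₂, h₂, hg₂, hh₂, he₂⟩ := hf₂
  obtain ⟨P₁, Q₁, hP₁, hQ₁, hP₁0, hQ₁0, hd₁⟩ :=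
    exists_nonneg_decomposition hD hne hg₁ hh₁ he₁
  obtain ⟨P₂, Q₂, hP₂, hQ₂, hP₂0, hQ₂0, hd₂⟩ :=
    exists_nonneg_decomposition hD hne hg₂ hh₂ he₂
  -- convexity of the four squares
  have hA : ConvexOn ℝ D (fun x => (P₁ x + P₂ x) * (P₁ x + P₂ x)) :=
    sq_convexOn (hP₁.add hP₂) (fun x hx => add_nonneg (hP₁0 x hx) (hP₂0 x hx))
  have hB : ConvexOn ℝ D (fun x => (Q₁ x + Q₂ x) * (Q₁ x + Q₂ x)) :=
    sq_convexOn (hQ₁.add hQ₂) (fun x hx => add_nonneg (hQ₁0 x hx) (hQ₂0 x hx))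
  have hC : ConvexOn ℝ D (fun x => (P₁ x + Q₂ x) * (P₁ x + Q₂ x)) :=
    sq_convexOn (hP₁.add hQ₂) (fun x hx => add_nonneg (hP₁0 x hx) (hQ₂0 x hx))
  have hF : ConvexOn ℝ D (fun x => (Q₁ x + P₂ x) * (Q₁ x + P₂ x)) :=
    sq_convexOn (hQ₁.add hP₂) (fun x hx => add_nonneg (hQ₁0 x hx) (hP₂0 x hx))
  refine ⟨fun x => (1/2 : ℝ) * ((P₁ x + P₂ x) * (P₁ x + P₂ x) + (Q₁ x + Q₂ x) * (Q₁ x + Q₂ x)),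
          fun x => (1/2 : ℝ) * ((P₁ x + Q₂ x) * (P₁ x + Q₂ x) + (Q₁ x + P₂ x) * (Q₁ x + P₂ x)),
          ?_, ?_, ?_⟩
  · have := (hA.add hB).smul (c := (1/2 : ℝ)) (by norm_num)
    exact convexOn_congr this (fun x => by simp [smul_eq_mul])
  · have := (hC.add hF).smul (c := (1/2 : ℝ)) (by norm_num)
    exact convexOn_congr this (fun x => by simp [smul_eq_mul])
  · intro x hx
    rw [hd₁ x hx, hd₂ x hx]
    ring
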